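/- For every s ≥ 0 and every real polynomial p with deg p < 2^s, one has ∫ (P_{2^s} + r_s/2)·p dμ = 0. Consequently the monic orthogonal polynomial Q_{2^s} with respect to μ coincides with the Chebyshev polynomial: Q_{2^s} = P_{2^s} + r_s/2. -/

import Mathlib

open Polynomial MeasureTheory Filter

/-- `r γ s` : the recursively defined scales `r 0 = 1`, `r (s+1) = γ (s+1) * (r s)²`. -/
noncomputable def r (γ : ℕ → ℝ) : ℕ → ℝ
  | 0 => 1
  | s + 1 => γ (s + 1) * (r γ s) ^ 2

/-- `P γ s` : the polynomial `P_{2^s}`, with `P_1 = X - 1` and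
`P_{2^{s+1}} = P_{2^s} · (P_{2^s} + r_s)`. -/
noncomputable def P (γ : ℕ → ℝ) : ℕ → Polynomial ℝ
  | 0 => X - 1
  | s + 1 => P γ s * (P γ s + C (r γ s))

/-- The integral `∫ f dν_s` of a function `f` against the normalized counting measure `ν_s`
on the `2^s` (simple, real) zeros of `P_{2^s} + r_s/2`. -/
noncomputable def nuInt (γ : ℕ → ℝ) (s : ℕ) (f : ℝ → ℝ) : ℝ :=
  (((P γ s + C (r γ s / 2)).roots.map f).sum) / 2 ^ s

variable (γ : ℕ → ℝ)

lemma r_pos (hγ : ∀ s : ℕ, 0 < γ (s + 1) ∧ γ (s + 1) < 1 / 4) : ∀ s, 0 < r γ s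
  | 0 => one_pos
  | s + 1 => mul_pos (hγ s).1 (pow_pos (r_pos hγ s) 2)

lemma P_monic : ∀ s, (P γ s).Monic ∧ (P γ s).natDegree = 2 ^ s
  | 0 => by
    refine ⟨by simpa [P] using monic_X_sub_C (1 : ℝ), ?_⟩
    show (X - 1 : Polynomial ℝ).natDegree = 1
    simpa using natDegree_X_sub_C (1 : ℝ)
  | s + 1 => by
    obtain ⟨hm, hd⟩ := P_monic s
    have hdeg : (P γ s).degree = (2 ^ s : ℕ) := by
      rw [degree_eq_natDegree hm.ne_zero, hd]
    have hm2 : (P γ s + C (r γ s)).Monic := by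
      apply hm.add_of_left
      calc (C (r γ s)).degree ≤ 0 := degree_C_le
        _ < (P γ s).degree := by
          rw [hdeg]; exact_mod_cast WithBot.coe_lt_coe.2 (pow_pos two_pos s)
    refine ⟨hm.mul hm2, ?_⟩
    show (P γ s * (P γ s + C (r γ s))).natDegree = 2 ^ (s + 1)
    rw [hm.natDegree_mul hm2, hd, natDegree_add_C, hd]; ring

lemma Pc_monic (c : ℝ) (s : ℕ) : (P γ s + C c).Monic := by
  obtain ⟨hm, hd⟩ := P_monic γ s
  apply hm.add_of_left
  calc (C c).degree ≤ 0 := degree_C_le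
    _ < (P γ s).degree := by
      rw [degree_eq_natDegree hm.ne_zero, hd]
      exact_mod_cast WithBot.coe_lt_coe.2 (pow_pos two_pos s)

lemma Pc_natDegree (c : ℝ) (s : ℕ) : (P γ s + C c).natDegree = 2 ^ s := by
  rw [natDegree_add_C, (P_monic γ s).2]

/-- Quadratic factorization of `P_{s+1} + c`. -/
lemma factor (hγ : ∀ s : ℕ, 0 < γ (s + 1) ∧ γ (s + 1) < 1 / 4) (s : ℕ) (c : ℝ)
    (hc0 : 0 < c) (hc1 : c < r γ (s + 1)) :
    ∃ c₁ c₂ : ℝ, 0 < c₁ ∧ c₁ < r γ s ∧ 0 < c₂ ∧ c₂ < r γ s ∧ c₁ + c₂ = r γ s ∧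
      P γ (s + 1) + C c = (P γ s + C c₁) * (P γ s + C c₂) := by
  have hR : 0 < r γ s := r_pos γ hγ s
  set R := r γ s with hRdef
  have hc1' : c < γ (s + 1) * R ^ 2 := hc1
  have h4 : 4 * c < R ^ 2 := by nlinarith [(hγ s).2, sq_nonneg R]
  set d := Real.sqrt (R ^ 2 - 4 * c) with hddef
  have hd2 : d ^ 2 = R ^ 2 - 4 * c := Real.sq_sqrt (by linarith)
  have hd0 : 0 ≤ d := Real.sqrt_nonneg _
  have hdR : d < R := by nlinarith
  refine ⟨(R - d) / 2, (R + d) / 2, by linarith, by linarith, by linarith, by linarith,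
    by ring, ?_⟩
  have e2 : (R - d) / 2 * ((R + d) / 2) = c := by nlinarith
  show P γ s * (P γ s + C R) + C c = _
  rw [← e2, C_mul]
  have eR : C R = C ((R - d) / 2) + C ((R + d) / 2) := by rw [← C_add]; ring_nf
  rw [eR]; ring

lemma card_roots (hγ : ∀ s : ℕ, 0 < γ (s + 1) ∧ γ (s + 1) < 1 / 4) :
    ∀ s, ∀ c : ℝ, 0 < c → c < r γ s → (P γ s + C c).roots.card = 2 ^ s
  | 0 => by
    intro c hc0 hc1
    have h : P γ 0 + C c = X - C (1 - c) := by
      show X - 1 + C c = _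
      rw [C_sub, C_1]; ring
    rw [h, roots_X_sub_C]; simp
  | s + 1 => by
    intro c hc0 hc1
    obtain ⟨c₁, c₂, h10, h1r, h20, h2r, _, hfac⟩ := factor γ hγ s c hc0 hc1
    rw [hfac, roots_mul (mul_ne_zero (Pc_monic γ c₁ s).ne_zero (Pc_monic γ c₂ s).ne_zero),
      Multiset.card_add, card_roots hγ s c₁ h10 h1r, card_roots hγ s c₂ h20 h2r]
    ring

/-- Sums of `p` over the roots of `P_s + c` do not depend on `c` (for `deg p < 2^s`). -/
lemma sum_indep (hγ : ∀ s : ℕ, 0 < γ (s + 1) ∧ γ (s + 1) < 1 / 4) :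
    ∀ s, ∀ c : ℝ, 0 < c → c < r γ s → ∀ p : Polynomial ℝ,
      p.degree < ((2 ^ s : ℕ) : WithBot ℕ) →
      ((P γ s + C c).roots.map p.eval).sum
        = ((P γ s + C (r γ s / 2)).roots.map p.eval).sum
  | 0 => by
    intro c hc0 hc1 p hp
    have hp0 : p = C (p.coeff 0) :=
      eq_C_of_degree_le_zero (Nat.WithBot.lt_one_iff_le_zero.mp (by exact_mod_cast hp))
    have h : ∀ e : ℝ, P γ 0 + C e = X - C (1 - e) := by
      intro e; show X - 1 + C e = _; rw [C_sub, C_1]; ring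
    obtain ⟨a, rfl⟩ : ∃ a, p = C a := ⟨p.coeff 0, hp0⟩
    rw [h, h, roots_X_sub_C, roots_X_sub_C]
    simp
  | s + 1 => by
    intro c hc0 hc1 p hp
    have hrpos := r_pos γ hγ
    have key : ∀ c' : ℝ, 0 < c' → c' < r γ (s + 1) →
        ((P γ (s + 1) + C c').roots.map p.eval).sum
          = -(r γ s) * ((P γ s + C (r γ s / 2)).roots.map (p /ₘ P γ s).eval).sum
            + 2 * ((P γ s + C (r γ s / 2)).roots.map (p %ₘ P γ s).eval).sum := by
      intro c' h0 h1
      obtain ⟨c₁, c₂, h10, h1r, h20, h2r, hsum, hfac⟩ := factor γ hγ s c' h0 h1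
      have hmon := (P_monic γ s).1
      have hdeg2 : (P γ s).degree = ((2 ^ s : ℕ) : WithBot ℕ) := by
        rw [degree_eq_natDegree hmon.ne_zero, (P_monic γ s).2]
      have hp₀ : (p %ₘ P γ s).degree < ((2 ^ s : ℕ) : WithBot ℕ) := by
        rw [← hdeg2]; exact degree_modByMonic_lt p hmon
      have hp₁ : (p /ₘ P γ s).degree < ((2 ^ s : ℕ) : WithBot ℕ) := by
        rcases eq_or_ne (p /ₘ P γ s) 0 with h | h
        · rw [h, degree_zero]; exact WithBot.bot_lt_coe _
        · have hpne : p ≠ 0 := by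
            intro h0'; rw [h0', zero_divByMonic] at h; exact h rfl
          have hnd : p.natDegree < 2 ^ (s + 1) :=
            (natDegree_lt_iff_degree_lt hpne).mpr hp
          rw [← natDegree_lt_iff_degree_lt h, natDegree_divByMonic p hmon,
            (P_monic γ s).2]
          have : (2 : ℕ) ^ (s + 1) = 2 ^ s + 2 ^ s := by ring
          omega
      -- sum over one factor's roots
      have piece : ∀ e : ℝ, 0 < e → e < r γ s →
          ((P γ s + C e).roots.map p.eval).sum
            = -e * ((P γ s + C (r γ s / 2)).roots.map (p /ₘ P γ s).eval).sum
              + ((P γ s + C (r γ s / 2)).roots.map (p %ₘ P γ s).eval).sum := by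
        intro e he0 he1
        have hpt : ∀ x ∈ (P γ s + C e).roots,
            p.eval x = -e * (p /ₘ P γ s).eval x + (p %ₘ P γ s).eval x := by
          intro x hx
          have hx0 : (P γ s).eval x = -e := by
            have := isRoot_of_mem_roots hx
            simp only [IsRoot, eval_add, eval_C] at this
            linarith
          conv_lhs => rw [← modByMonic_add_div p (P γ s)]
          simp [hx0]; ring
        rw [Multiset.map_congr rfl hpt, Multiset.sum_map_add]
        rw [Multiset.sum_map_mul_left]
        rw [sum_indep hγ s e he0 he1 _ hp₁, sum_indep hγ s e he0 he1 _ hp₀]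
      rw [hfac, roots_mul (mul_ne_zero (Pc_monic γ c₁ s).ne_zero (Pc_monic γ c₂ s).ne_zero),
        Multiset.map_add, Multiset.sum_add, piece c₁ h10 h1r, piece c₂ h20 h2r, ← hsum]
      ring
    rw [key c hc0 hc1, key (r γ (s + 1) / 2) (by linarith [hrpos (s + 1)])
      (by linarith [hrpos (s + 1)])]

/-- The key orthogonality at the level of counting measures. -/
lemma sum_F_zero (hγ : ∀ s : ℕ, 0 < γ (s + 1) ∧ γ (s + 1) < 1 / 4) (s : ℕ)
    (p : Polynomial ℝ) (hp : p.degree < ((2 ^ s : ℕ) : WithBot ℕ)) :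
    ∀ u, ∀ c : ℝ, 0 < c → c < r γ u → s + 1 ≤ u →
      ((P γ u + C c).roots.map ((P γ s + C (r γ s / 2)) * p).eval).sum = 0
  | 0 => by omega
  | u + 1 => by
    intro c hc0 hc1 hsu
    obtain ⟨c₁, c₂, h10, h1r, h20, h2r, hsum, hfac⟩ := factor γ hγ u c hc0 hc1
    rw [hfac, roots_mul (mul_ne_zero (Pc_monic γ c₁ u).ne_zero (Pc_monic γ c₂ u).ne_zero),
      Multiset.map_add, Multiset.sum_add]
    rcases Nat.lt_or_ge u (s + 1) with hu | hu
    · -- u = s : the base case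
      have hus : u = s := by omega
      subst hus
      have piece : ∀ e : ℝ, 0 < e → e < r γ u →
          ((P γ u + C e).roots.map ((P γ u + C (r γ u / 2)) * p).eval).sum
            = (r γ u / 2 - e) * ((P γ u + C (r γ u / 2)).roots.map p.eval).sum := by
        intro e he0 he1
        have hpt : ∀ x ∈ (P γ u + C e).roots,
            ((P γ u + C (r γ u / 2)) * p).eval x = (r γ u / 2 - e) * p.eval x := by
          intro x hx
          have hx0 : (P γ u).eval x = -e := by
            have := isRoot_of_mem_roots hx
            simp only [IsRoot, eval_add, eval_C] at this
            linarith
          simp only [eval_mul, eval_add, eval_C, hx0]; ring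
        rw [Multiset.map_congr rfl hpt, Multiset.sum_map_mul_left,
          sum_indep γ hγ u e he0 he1 p hp]
      rw [piece c₁ h10 h1r, piece c₂ h20 h2r]
      set N := ((P γ u + C (r γ u / 2)).roots.map p.eval).sum
      linear_combination (-N) * hsum
    · rw [sum_F_zero hγ s p hp u c₁ h10 h1r hu, sum_F_zero hγ s p hp u c₂ h20 h2r hu]
      ring

theorem stmt_4 (γ : ℕ → ℝ) (hγ : ∀ s : ℕ, 0 < γ (s + 1) ∧ γ (s + 1) < 1 / 4)
    (μ : Measure ℝ) [IsProbabilityMeasure μ]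
    (hμint : ∀ p : Polynomial ℝ, Integrable (fun x => p.eval x) μ)
    (hμpos : ∀ p : Polynomial ℝ, p ≠ 0 → 0 < ∫ x, (p.eval x) ^ 2 ∂μ)
    (hμconv : ∀ p : Polynomial ℝ,
      Tendsto (fun s => nuInt γ s (fun x => p.eval x)) atTop (nhds (∫ x, p.eval x ∂μ)))
    (Q : ℕ → Polynomial ℝ) (hQmonic : ∀ n, (Q n).Monic) (hQdeg : ∀ n, (Q n).natDegree = n)
    (hQorth : ∀ n : ℕ, ∀ p : Polynomial ℝ, p.degree < (n : WithBot ℕ) →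
      ∫ x, (Q n).eval x * p.eval x ∂μ = 0)
    (s : ℕ) :
    (∀ p : Polynomial ℝ, p.degree < ((2 ^ s : ℕ) : WithBot ℕ) →
      ∫ x, ((P γ s).eval x + r γ s / 2) * p.eval x ∂μ = 0) ∧
    Q (2 ^ s) = P γ s + C (r γ s / 2) := by
  have hrpos := r_pos γ hγ
  have part1 : ∀ p : Polynomial ℝ, p.degree < ((2 ^ s : ℕ) : WithBot ℕ) →
      ∫ x, ((P γ s).eval x + r γ s / 2) * p.eval x ∂μ = 0 := by
    intro p hp
    set F := (P γ s + C (r γ s / 2)) * p with hF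
    have hconv := hμconv F
    have hzero : ∀ᶠ t in atTop, nuInt γ t (fun x => F.eval x) = (0 : ℝ) := by
      filter_upwards [eventually_ge_atTop (s + 1)] with t ht
      unfold nuInt
      rw [sum_F_zero γ hγ s p hp t (r γ t / 2) (by linarith [hrpos t]) (by linarith [hrpos t]) ht]
      simp
    have hI : ∫ x, F.eval x ∂μ = 0 :=
      tendsto_nhds_unique (hconv.congr' hzero) tendsto_const_nhds
    have hfun : (fun x => F.eval x) = fun x => ((P γ s).eval x + r γ s / 2) * p.eval x := by
      funext x; simp [hF]
    rw [hfun] at hI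
    exact hI
  refine ⟨part1, ?_⟩
  by_contra hne
  set D := Q (2 ^ s) - (P γ s + C (r γ s / 2)) with hD
  have hDne : D ≠ 0 := sub_ne_zero.mpr hne
  have h1 : (Q (2 ^ s)).degree = ((2 ^ s : ℕ) : WithBot ℕ) := by
    rw [degree_eq_natDegree (hQmonic _).ne_zero, hQdeg]
  have h2 : (P γ s + C (r γ s / 2)).degree = ((2 ^ s : ℕ) : WithBot ℕ) := by
    rw [degree_eq_natDegree (Pc_monic γ _ s).ne_zero, Pc_natDegree]
  have hDdeg : D.degree < ((2 ^ s : ℕ) : WithBot ℕ) := by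
    have := degree_sub_lt (h1.trans h2.symm) (hQmonic _).ne_zero
      ((hQmonic _).leadingCoeff.trans (Pc_monic γ _ s).leadingCoeff.symm)
    rw [h1] at this
    exact this
  have hQint := hQorth (2 ^ s) D hDdeg
  have hPint := part1 D hDdeg
  have int1 : Integrable (fun x => (Q (2 ^ s)).eval x * D.eval x) μ := by
    simpa [eval_mul] using hμint (Q (2 ^ s) * D)
  have int2 : Integrable (fun x => ((P γ s).eval x + r γ s / 2) * D.eval x) μ := by
    simpa [eval_mul, eval_add, eval_C] using hμint ((P γ s + C (r γ s / 2)) * D)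
  have hsq : ∫ x, (D.eval x) ^ 2 ∂μ = 0 := by
    have hfun : ∀ x : ℝ, (D.eval x) ^ 2
        = (Q (2 ^ s)).eval x * D.eval x - ((P γ s).eval x + r γ s / 2) * D.eval x := by
      intro x; simp [hD]; ring
    calc ∫ x, (D.eval x) ^ 2 ∂μ
        = ∫ x, ((Q (2 ^ s)).eval x * D.eval x
            - ((P γ s).eval x + r γ s / 2) * D.eval x) ∂μ := by simp_rw [hfun]
      _ = (∫ x, (Q (2 ^ s)).eval x * D.eval x ∂μ)
            - ∫ x, ((P γ s).eval x + r γ s / 2) * D.eval x ∂μ := integral_sub int1 int2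
      _ = 0 := by rw [hQint, hPint]; ring
  exact absurd hsq (ne_of_gt (hμpos D hDne))
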